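/- arXiv:1402.2088 — 3 statements merged into one kernel-verified Lean document; each statement's English description precedes it below -/
import Mathlib

section
/- Let f : ℝⁿ → ℝ satisfy f(w) ≥ 0 for all w, and suppose f attains its global minimum at w*, i.e. f(w*) ≤ f(w) for all w ∈ ℝⁿ. Then for every point p = (w, y) in the epigraph C_f = {(w, y) : f(w) ≤ y} and every point q = (u, t) in the level set C_s = {(u, t) : t ≤ 0}, one has ‖p − q‖ ≥ f(w*); moreover the pair p* = (w*, f(w*)) ∈ C_f, q* = (w*, 0) ∈ C_s achieves ‖p* − q*‖ = f(w*). Hence the distance between the sets C_f and C_s equals the minimum value f(w*). -/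
/-- The space `ℝⁿ × ℝ` with the Euclidean (ℓ²) product norm. -/
abbrev LiftedSpace (n : ℕ) : Type := WithLp 2 (EuclideanSpace ℝ (Fin n) × ℝ)

/-- The epigraph `C_f = {(w, y) : f w ≤ y}` in `ℝⁿ × ℝ` with the ℓ² product norm. -/
def epigraphSet (n : ℕ) (f : EuclideanSpace ℝ (Fin n) → ℝ) : Set (LiftedSpace n) :=
  {p | f (WithLp.equiv 2 _ p).1 ≤ (WithLp.equiv 2 _ p).2}

/-- The level set `C_s = {(w, y) : y ≤ 0}` in `ℝⁿ × ℝ` with the ℓ² product norm. -/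
def levelSet (n : ℕ) : Set (LiftedSpace n) :=
  {p | (WithLp.equiv 2 _ p).2 ≤ 0}

lemma snd_norm_le {n : ℕ} (x : LiftedSpace n) : ‖x.snd‖ ≤ ‖x‖ := by
  rw [WithLp.prod_norm_eq_of_L2]
  calc ‖x.snd‖ = Real.sqrt (‖x.snd‖ ^ 2) := by rw [Real.sqrt_sq (norm_nonneg _)]
  _ ≤ _ := Real.sqrt_le_sqrt (le_add_of_nonneg_left (by positivity))

/-- If `f ≥ 0` attains its global minimum at `wstar`, then every `p ∈ C_f` and `q ∈ C_s`
satisfy `‖p - q‖ ≥ f wstar`; the pair `(wstar, f wstar) ∈ C_f`, `(wstar, 0) ∈ C_s` achieves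
this bound, and hence the distance between the two sets equals `f wstar`. -/
theorem dist_epigraph_levelSet_eq_min (n : ℕ) (f : EuclideanSpace ℝ (Fin n) → ℝ)
    (hf0 : ∀ w, 0 ≤ f w) (wstar : EuclideanSpace ℝ (Fin n))
    (hmin : ∀ w, f wstar ≤ f w) :
    (∀ p ∈ epigraphSet n f, ∀ q ∈ levelSet n, f wstar ≤ ‖p - q‖) ∧
    ((WithLp.equiv 2 (EuclideanSpace ℝ (Fin n) × ℝ)).symm (wstar, f wstar) ∈ epigraphSet n f ∧
     (WithLp.equiv 2 (EuclideanSpace ℝ (Fin n) × ℝ)).symm (wstar, 0) ∈ levelSet n ∧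
     ‖(WithLp.equiv 2 (EuclideanSpace ℝ (Fin n) × ℝ)).symm (wstar, f wstar) -
        (WithLp.equiv 2 (EuclideanSpace ℝ (Fin n) × ℝ)).symm (wstar, 0)‖ = f wstar) ∧
    sInf {d : ℝ | ∃ p ∈ epigraphSet n f, ∃ q ∈ levelSet n, d = ‖p - q‖} = f wstar := by
  have hlow : ∀ p ∈ epigraphSet n f, ∀ q ∈ levelSet n, f wstar ≤ ‖p - q‖ := by
    intro p hp q hq
    have h2 : (p - q).snd = p.snd - q.snd := rfl
    calc f wstar ≤ f p.fst := hmin _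
    _ ≤ p.snd := hp
    _ ≤ p.snd - q.snd := by linarith [show q.snd ≤ 0 from hq]
    _ ≤ ‖p.snd - q.snd‖ := le_abs_self _
    _ = ‖(p - q).snd‖ := by rw [h2]
    _ ≤ ‖p - q‖ := snd_norm_le _
  have heq : ‖(WithLp.equiv 2 (EuclideanSpace ℝ (Fin n) × ℝ)).symm (wstar, f wstar) -
      (WithLp.equiv 2 (EuclideanSpace ℝ (Fin n) × ℝ)).symm (wstar, 0)‖ = f wstar := by
    have : (WithLp.equiv 2 (EuclideanSpace ℝ (Fin n) × ℝ)).symm (wstar, f wstar) -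
        (WithLp.equiv 2 (EuclideanSpace ℝ (Fin n) × ℝ)).symm (wstar, 0)
        = (WithLp.equiv 2 (EuclideanSpace ℝ (Fin n) × ℝ)).symm (0, f wstar) := by
      apply (WithLp.equiv 2 _).injective
      simp [Prod.ext_iff, sub_eq_zero]
    rw [this, WithLp.prod_norm_eq_of_L2]
    simp [Real.sqrt_sq (hf0 wstar), abs_of_nonneg (hf0 wstar)]
  have hpm : (WithLp.equiv 2 (EuclideanSpace ℝ (Fin n) × ℝ)).symm (wstar, f wstar)
      ∈ epigraphSet n f := by simp [epigraphSet]
  have hqm : (WithLp.equiv 2 (EuclideanSpace ℝ (Fin n) × ℝ)).symm (wstar, 0)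
      ∈ levelSet n := by simp [levelSet]
  refine ⟨hlow, ⟨hpm, hqm, heq⟩, ?_⟩
  apply le_antisymm
  · exact csInf_le ⟨f wstar, by rintro d ⟨p, hp, q, hq, rfl⟩; exact hlow p hp q hq⟩
      ⟨_, hpm, _, hqm, heq.symm⟩
  · exact le_csInf ⟨_, _, hpm, _, hqm, heq.symm⟩
      (by rintro d ⟨p, hp, q, hq, rfl⟩; exact hlow p hp q hq)
end

section
/- (Bregman's POCS convergence theorem) Let K₁ and K₂ be nonempty closed convex subsets of ℝⁿ with K₁ ∩ K₂ ≠ ∅, and let P₁ and P₂ be the metric projections onto K₁ and K₂. Define the alternating projection sequence from any x₀ ∈ ℝⁿ by x_{n+1} = P₁ x_n when n is even and x_{n+1} = P₂ x_n when n is odd. Then the sequence (x_n) converges to a point x* ∈ K₁ ∩ K₂. -/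
open Filter Topology RealInnerProductSpace

/-- Key projection inequality: Fejér-type contraction. -/
lemma pocs_proj_ineq {E : Type*} [NormedAddCommGroup E] [InnerProductSpace ℝ E]
    {K : Set E} (hK : Convex ℝ K) (P : E → E)
    (hP : ∀ x, P x ∈ K ∧ ∀ y ∈ K, ‖x - P x‖ ≤ ‖x - y‖)
    (x z : E) (hz : z ∈ K) :
    ‖P x - z‖ ^ 2 + ‖x - P x‖ ^ 2 ≤ ‖x - z‖ ^ 2 := by
  obtain ⟨hmem, hmin⟩ := hP x
  have hbdd : BddBelow (Set.range fun w : K => ‖x - (w : E)‖) := by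
    refine ⟨0, ?_⟩; rintro b ⟨w, rfl⟩; exact norm_nonneg _
  have : Nonempty K := ⟨⟨P x, hmem⟩⟩
  have hinf : ‖x - P x‖ = ⨅ w : K, ‖x - (w : E)‖ := by
    refine le_antisymm (le_ciInf fun w => hmin w w.2) ?_
    exact ciInf_le hbdd ⟨P x, hmem⟩
  have hchar := (norm_eq_iInf_iff_real_inner_le_zero hK hmem).mp hinf z hz
  have hexp : ‖x - z‖ ^ 2 = ‖x - P x‖ ^ 2 + 2 * ⟪x - P x, P x - z⟫ + ‖P x - z‖ ^ 2 := by
    rw [show x - z = (x - P x) + (P x - z) by abel, norm_add_sq_real]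
  have hneg : ⟪x - P x, P x - z⟫ = -⟪x - P x, z - P x⟫ := by
    rw [show P x - z = -(z - P x) by abel, inner_neg_right]
  linarith

/-- Bregman's POCS convergence theorem: if `K₁ ∩ K₂ ≠ ∅`, the alternating projection
sequence converges to a point of `K₁ ∩ K₂`. -/
theorem pocs_converges (n : ℕ) (K₁ K₂ : Set (EuclideanSpace ℝ (Fin n)))
    (hne₁ : K₁.Nonempty) (hne₂ : K₂.Nonempty)
    (hclosed₁ : IsClosed K₁) (hclosed₂ : IsClosed K₂)
    (hconv₁ : Convex ℝ K₁) (hconv₂ : Convex ℝ K₂)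
    (hint : (K₁ ∩ K₂).Nonempty)
    (P₁ P₂ : EuclideanSpace ℝ (Fin n) → EuclideanSpace ℝ (Fin n))
    (hP₁ : ∀ x, P₁ x ∈ K₁ ∧ ∀ y ∈ K₁, ‖x - P₁ x‖ ≤ ‖x - y‖)
    (hP₂ : ∀ x, P₂ x ∈ K₂ ∧ ∀ y ∈ K₂, ‖x - P₂ x‖ ≤ ‖x - y‖)
    (x : ℕ → EuclideanSpace ℝ (Fin n))
    (hx : ∀ m : ℕ, x (m + 1) = if Even m then P₁ (x m) else P₂ (x m)) :
    ∃ xstar : EuclideanSpace ℝ (Fin n), xstar ∈ K₁ ∩ K₂ ∧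
      Tendsto x atTop (𝓝 xstar) := by
  obtain ⟨z0, hz01, hz02⟩ := hint
  -- Fejér inequality along the sequence
  have key : ∀ z ∈ K₁ ∩ K₂, ∀ m,
      ‖x (m + 1) - z‖ ^ 2 + ‖x m - x (m + 1)‖ ^ 2 ≤ ‖x m - z‖ ^ 2 := by
    intro z hz m
    rcases Nat.even_or_odd m with hm | hm
    · rw [hx m, if_pos hm]
      exact pocs_proj_ineq hconv₁ P₁ hP₁ (x m) z hz.1
    · rw [hx m, if_neg (Nat.not_even_iff_odd.mpr hm)]
      exact pocs_proj_ineq hconv₂ P₂ hP₂ (x m) z hz.2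
  have hanti : ∀ z ∈ K₁ ∩ K₂, Antitone fun m => ‖x m - z‖ := by
    intro z hz
    apply antitone_nat_of_succ_le
    intro m
    have h := key z hz m
    nlinarith [norm_nonneg (x (m + 1) - z), norm_nonneg (x m - z),
      norm_nonneg (x m - x (m + 1))]
  -- successive differences tend to 0
  set e : ℕ → ℝ := fun m => ‖x m - x (m + 1)‖ with he_def
  have hsum : ∀ N, ∑ m ∈ Finset.range N, e m ^ 2 ≤ ‖x 0 - z0‖ ^ 2 := by
    intro N
    have : ∑ m ∈ Finset.range N, e m ^ 2 ≤ ‖x 0 - z0‖ ^ 2 - ‖x N - z0‖ ^ 2 := by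
      induction N with
      | zero => simp
      | succ N ih =>
        rw [Finset.sum_range_succ]
        have := key z0 ⟨hz01, hz02⟩ N
        linarith
    nlinarith [sq_nonneg ‖x N - z0‖]
  have hsummable : Summable fun m => e m ^ 2 :=
    summable_of_sum_range_le (fun m => sq_nonneg _) hsum
  have hsq0 : Tendsto (fun m => e m ^ 2) atTop (𝓝 0) := hsummable.tendsto_atTop_zero
  have he0 : Tendsto e atTop (𝓝 0) := by
    have h1 : Tendsto (fun m => Real.sqrt (e m ^ 2)) atTop (𝓝 (Real.sqrt 0)) :=
      (Real.continuous_sqrt.tendsto 0).comp hsq0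
    have h2 : ∀ m, Real.sqrt (e m ^ 2) = e m := fun m => Real.sqrt_sq (norm_nonneg _)
    simpa [h2] using h1
  -- bounded subsequence at odd indices, living in K₁
  set y : ℕ → EuclideanSpace ℝ (Fin n) := fun m => x (2 * m + 1) with hy_def
  have hy_mem : ∀ m, y m ∈ K₁ := by
    intro m
    show x (2 * m + 1) ∈ K₁
    rw [hx (2 * m), if_pos (even_two_mul m)]
    exact (hP₁ _).1
  have hy_bdd : ∀ m, y m ∈ Metric.closedBall z0 ‖x 0 - z0‖ := by
    intro m
    rw [Metric.mem_closedBall, dist_eq_norm]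
    exact hanti z0 ⟨hz01, hz02⟩ (Nat.zero_le (2 * m + 1))
  obtain ⟨a, -, φ, hφ, hφa⟩ :=
    tendsto_subseq_of_bounded Metric.isBounded_closedBall hy_bdd
  have ha1 : a ∈ K₁ :=
    hclosed₁.mem_of_tendsto hφa (Eventually.of_forall fun k => hy_mem (φ k))
  -- the shifted subsequence lies in K₂ and has the same limit
  have hidx : Tendsto (fun k => 2 * φ k + 1) atTop atTop := by
    apply tendsto_atTop_mono (fun k => ?_) hφ.tendsto_atTop
    omega
  have hw_mem : ∀ k, x (2 * φ k + 1 + 1) ∈ K₂ := by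
    intro k
    rw [hx (2 * φ k + 1), if_neg (by simp [Nat.even_add_one, parity_simps])]
    exact (hP₂ _).1
  have hw_tendsto : Tendsto (fun k => x (2 * φ k + 1 + 1)) atTop (𝓝 a) := by
    apply hφa.congr_dist
    have : Tendsto (fun k => e (2 * φ k + 1)) atTop (𝓝 0) := he0.comp hidx
    refine this.congr fun k => ?_
    simp [he_def, dist_eq_norm, hy_def]
  have ha2 : a ∈ K₂ :=
    hclosed₂.mem_of_tendsto hw_tendsto (Eventually.of_forall hw_mem)
  -- Fejér monotonicity with respect to a gives convergence of whole sequence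
  refine ⟨a, ⟨ha1, ha2⟩, ?_⟩
  have hanti' := hanti a ⟨ha1, ha2⟩
  have hbdd : BddBelow (Set.range fun m => ‖x m - a‖) := by
    refine ⟨0, ?_⟩; rintro b ⟨m, rfl⟩; exact norm_nonneg _
  have hlim : Tendsto (fun m => ‖x m - a‖) atTop (𝓝 (⨅ m, ‖x m - a‖)) :=
    tendsto_atTop_ciInf hanti' hbdd
  have hsub0 : Tendsto (fun k => ‖x (2 * φ k + 1) - a‖) atTop (𝓝 0) := by
    have := (tendsto_iff_dist_tendsto_zero.mp hφa)
    simpa [dist_eq_norm, hy_def] using this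
  have hsub : Tendsto (fun k => ‖x (2 * φ k + 1) - a‖) atTop (𝓝 (⨅ m, ‖x m - a‖)) :=
    hlim.comp hidx
  have hinf0 : (⨅ m, ‖x m - a‖) = 0 := tendsto_nhds_unique hsub hsub0
  rw [tendsto_iff_dist_tendsto_zero]
  simpa [dist_eq_norm, hinf0] using hlim
end

section
/- (Gubin–Polyak–Raik, non-intersecting case) Let K₁ and K₂ be nonempty closed convex subsets of ℝⁿ with K₁ ∩ K₂ = ∅, and suppose K₁ is bounded (hence compact). Let P₁, P₂ be the metric projections onto K₁, K₂, and define the alternating projection sequence from any x₀ by x_{n+1} = P₁ x_n for n even and x_{n+1} = P₂ x_n for n odd. Then the odd-indexed iterates converge to a point a ∈ K₁ and the even-indexed iterates (from index 2 on) converge to a point b ∈ K₂ such that ‖a − b‖ = inf{‖u − v‖ : u ∈ K₁, v ∈ K₂}; i.e. the iterates oscillate between a pair of nearest points of the two sets. -/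
open Filter Topology Metric

open scoped RealInnerProductSpace

section Aux
variable {E : Type*} [NormedAddCommGroup E] [InnerProductSpace ℝ E]

lemma aux_norm_le {w z : E} (h : ‖w‖ ^ 2 ≤ ⟪z, w⟫) : ‖w‖ ≤ ‖z‖ := by
  have h2 := real_inner_le_norm z w
  nlinarith [norm_nonneg w, norm_nonneg z]

lemma proj_var_ineq {K : Set E} (hK : Convex ℝ K)
    {P : E → E} (hP : ∀ x, P x ∈ K ∧ ∀ y ∈ K, ‖x - P x‖ ≤ ‖x - y‖) (x : E) :
    ∀ z ∈ K, ⟪x - P x, z - P x⟫ ≤ 0 := by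
  have hne : Nonempty K := ⟨⟨P x, (hP x).1⟩⟩
  have h : ‖x - P x‖ = ⨅ w : K, ‖x - w‖ := by
    refine le_antisymm (le_ciInf fun w => (hP x).2 w w.2) ?_
    exact ciInf_le ⟨0, by rintro r ⟨w, rfl⟩; positivity⟩ (⟨P x, (hP x).1⟩ : K)
  exact (norm_eq_iInf_iff_real_inner_le_zero hK (hP x).1).1 h

lemma proj_nonexp {K : Set E} (hK : Convex ℝ K)
    {P : E → E} (hP : ∀ x, P x ∈ K ∧ ∀ y ∈ K, ‖x - P x‖ ≤ ‖x - y‖) (u v : E) :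
    ‖P u - P v‖ ≤ ‖u - v‖ := by
  have h1 := proj_var_ineq hK hP u (P v) (hP v).1
  have h2 := proj_var_ineq hK hP v (P u) (hP u).1
  refine aux_norm_le ?_
  have e : ⟪u - v, P u - P v⟫
      = ‖P u - P v‖ ^ 2 - ⟪u - P u, P v - P u⟫ - ⟪v - P v, P u - P v⟫ := by
    have := real_inner_self_eq_norm_sq (P u - P v)
    simp only [inner_sub_left, inner_sub_right] at *
    nlinarith [real_inner_comm (P u) (P v), real_inner_comm u (P v), real_inner_comm u (P u),
      real_inner_comm v (P u), real_inner_comm v (P v)]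
  nlinarith

lemma pair_min {K₁ K₂ : Set E} {a b : E}
    (h1 : ∀ u ∈ K₁, ⟪b - a, u - a⟫ ≤ 0) (h2 : ∀ v ∈ K₂, ⟪a - b, v - b⟫ ≤ 0)
    {u v : E} (hu : u ∈ K₁) (hv : v ∈ K₂) : ‖a - b‖ ≤ ‖u - v‖ := by
  have g1 := h1 u hu
  have g2 := h2 v hv
  refine aux_norm_le ?_
  have e : ⟪u - v, a - b⟫
      = ‖a - b‖ ^ 2 - ⟪b - a, u - a⟫ - ⟪a - b, v - b⟫ := by
    have := real_inner_self_eq_norm_sq (a - b)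
    simp only [inner_sub_left, inner_sub_right] at *
    nlinarith [real_inner_comm a b, real_inner_comm u a, real_inner_comm u b,
      real_inner_comm v a, real_inner_comm v b, real_inner_comm a a, real_inner_comm b b]
  nlinarith

lemma proj_eq_of_norm_eq {K : Set E} (hK : Convex ℝ K)
    {P : E → E} (hP : ∀ x, P x ∈ K ∧ ∀ y ∈ K, ‖x - P x‖ ≤ ‖x - y‖)
    {w a : E} (ha : a ∈ K) (h : ‖w - a‖ = ‖w - P w‖) : a = P w := by
  have hv := proj_var_ineq hK hP w a ha
  have e : w - a = (w - P w) + (P w - a) := by abel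
  have hsq := norm_add_sq_real (w - P w) (P w - a)
  rw [← e, h] at hsq
  have h2 : ⟪w - P w, P w - a⟫ = - ⟪w - P w, a - P w⟫ := by
    rw [← inner_neg_right, neg_sub]
  have h3 : ‖P w - a‖ = 0 := by nlinarith [norm_nonneg (P w - a), sq_nonneg ‖P w - a‖]
  have := norm_sub_eq_zero_iff.1 h3
  exact this.symm

end Aux

/-- Gubin–Polyak–Raik: if `K₁ ∩ K₂ = ∅` and `K₁` is bounded, the odd-indexed alternating
projection iterates converge to `a ∈ K₁` and the even-indexed ones (from index 2 on) to
`b ∈ K₂`, where `‖a - b‖` equals the distance between the two sets. -/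
theorem pocs_nonintersecting_oscillation (n : ℕ) (K₁ K₂ : Set (EuclideanSpace ℝ (Fin n)))
    (hne₁ : K₁.Nonempty) (hne₂ : K₂.Nonempty)
    (hclosed₁ : IsClosed K₁) (hclosed₂ : IsClosed K₂)
    (hconv₁ : Convex ℝ K₁) (hconv₂ : Convex ℝ K₂)
    (hdisj : K₁ ∩ K₂ = ∅) (hbdd : Bornology.IsBounded K₁)
    (P₁ P₂ : EuclideanSpace ℝ (Fin n) → EuclideanSpace ℝ (Fin n))
    (hP₁ : ∀ x, P₁ x ∈ K₁ ∧ ∀ y ∈ K₁, ‖x - P₁ x‖ ≤ ‖x - y‖)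
    (hP₂ : ∀ x, P₂ x ∈ K₂ ∧ ∀ y ∈ K₂, ‖x - P₂ x‖ ≤ ‖x - y‖)
    (x : ℕ → EuclideanSpace ℝ (Fin n))
    (hx : ∀ m : ℕ, x (m + 1) = if Even m then P₁ (x m) else P₂ (x m)) :
    ∃ a ∈ K₁, ∃ b ∈ K₂,
      Tendsto (fun m : ℕ => x (2 * m + 1)) atTop (𝓝 a) ∧
      Tendsto (fun m : ℕ => x (2 * m + 2)) atTop (𝓝 b) ∧
      ‖a - b‖ = sInf {d : ℝ | ∃ u ∈ K₁, ∃ v ∈ K₂, d = ‖u - v‖} := by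
  classical
  -- recurrences
  have hodd : ∀ m, x (2 * m + 1) = P₁ (x (2 * m)) := fun m => by
    rw [hx (2 * m), if_pos (even_two_mul m)]
  have heven : ∀ m, x (2 * m + 2) = P₂ (x (2 * m + 1)) := fun m => by
    have : ¬ Even (2 * m + 1) := by simp [Nat.even_add_one, even_two_mul]
    rw [show 2 * m + 2 = (2 * m + 1) + 1 by ring, hx (2 * m + 1), if_neg this]
  set y : ℕ → EuclideanSpace ℝ (Fin n) := fun m => x (2 * m + 1) with hy
  have hyK : ∀ m, y m ∈ K₁ := fun m => by
    rw [hy]; simp only; rw [hodd m]; exact (hP₁ _).1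
  have hrec : ∀ m, y (m + 1) = P₁ (P₂ (y m)) := fun m => by
    have h1 := hodd (m + 1)
    have e : 2 * (m + 1) = 2 * m + 2 := by ring
    rw [e, heven m] at h1
    simpa [hy, e] using h1
  -- continuity of projections
  have hc₁ : Continuous P₁ := by
    refine LipschitzWith.continuous (K := 1) (LipschitzWith.of_dist_le_mul fun u v => ?_)
    simpa [dist_eq_norm] using proj_nonexp hconv₁ hP₁ u v
  have hc₂ : Continuous P₂ := by
    refine LipschitzWith.continuous (K := 1) (LipschitzWith.of_dist_le_mul fun u v => ?_)
    simpa [dist_eq_norm] using proj_nonexp hconv₂ hP₂ u v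
  -- distance-to-K₂ function
  have ginf : ∀ p, ‖p - P₂ p‖ = infDist p K₂ := by
    intro p
    refine le_antisymm ?_ (by simpa [dist_eq_norm] using infDist_le_dist_of_mem (hP₂ p).1)
    by_contra hlt
    push_neg at hlt
    obtain ⟨v, hv, hdv⟩ := (infDist_lt_iff hne₂).1 hlt
    exact absurd hdv (not_lt.2 (by simpa [dist_eq_norm] using (hP₂ p).2 v hv))
  -- the distance sequence is antitone
  have hmono : Antitone fun m => ‖y m - P₂ (y m)‖ := by
    refine antitone_nat_of_succ_le fun m => ?_
    have s1 : ‖y (m + 1) - P₂ (y (m + 1))‖ ≤ ‖y (m + 1) - P₂ (y m)‖ :=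
      (hP₂ _).2 _ (hP₂ _).1
    have s2 : ‖y (m + 1) - P₂ (y m)‖ ≤ ‖y m - P₂ (y m)‖ := by
      rw [hrec m, norm_sub_rev, norm_sub_rev (y m)]
      exact (hP₁ _).2 (y m) (hyK m)
    exact s1.trans s2
  -- compactness and subsequence
  have hcpt : IsCompact K₁ := Metric.isCompact_iff_isClosed_bounded.2 ⟨hclosed₁, hbdd⟩
  obtain ⟨a, haK, φ, hφ, hφa⟩ := hcpt.tendsto_subseq hyK
  -- limit of the antitone distance sequence
  have hbb : BddBelow (Set.range fun m => ‖y m - P₂ (y m)‖) :=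
    ⟨0, by rintro r ⟨m, rfl⟩; positivity⟩
  have hdL : Tendsto (fun m => ‖y m - P₂ (y m)‖) atTop
      (𝓝 (⨅ m, ‖y m - P₂ (y m)‖)) := tendsto_atTop_ciInf hmono hbb
  set L : ℝ := ⨅ m, ‖y m - P₂ (y m)‖ with hL
  have hgy : ∀ p : EuclideanSpace ℝ (Fin n), Continuous fun q => ‖q - P₂ q‖ := by
    intro _
    simp only [fun p => ginf p]
    exact continuous_infDist_pt K₂
  have hgcont : Continuous fun q : EuclideanSpace ℝ (Fin n) => ‖q - P₂ q‖ := hgy a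
  -- g a = L
  have hga : ‖a - P₂ a‖ = L := by
    have t1 : Tendsto (fun m => ‖y (φ m) - P₂ (y (φ m))‖) atTop (𝓝 L) :=
      hdL.comp hφ.tendsto_atTop
    have t2 : Tendsto (fun m => ‖y (φ m) - P₂ (y (φ m))‖) atTop (𝓝 ‖a - P₂ a‖) :=
      (hgcont.tendsto a).comp hφa
    exact tendsto_nhds_unique t2 t1
  -- g (T a) = L where T a = P₁ (P₂ a)
  have hgTa : ‖P₁ (P₂ a) - P₂ (P₁ (P₂ a))‖ = L := by
    have hTc : Continuous fun q => P₁ (P₂ q) := hc₁.comp hc₂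
    have t2 : Tendsto (fun m => ‖y (φ m + 1) - P₂ (y (φ m + 1))‖) atTop
        (𝓝 ‖P₁ (P₂ a) - P₂ (P₁ (P₂ a))‖) := by
      have : Tendsto (fun m => y (φ m + 1)) atTop (𝓝 (P₁ (P₂ a))) := by
        simp only [hrec]
        exact (hTc.tendsto a).comp hφa
      exact (hgcont.tendsto _).comp this
    have t1 : Tendsto (fun m => ‖y (φ m + 1) - P₂ (y (φ m + 1))‖) atTop (𝓝 L) :=
      hdL.comp ((tendsto_add_atTop_nat 1).comp hφ.tendsto_atTop)
    exact tendsto_nhds_unique t2 t1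
  -- fixed point: a = P₁ (P₂ a)
  have hfix : a = P₁ (P₂ a) := by
    set w := P₂ a with hw
    have c1 : ‖P₁ w - P₂ (P₁ w)‖ ≤ ‖P₁ w - w‖ := (hP₂ _).2 _ (hP₂ _).1
    have c2 : ‖P₁ w - w‖ ≤ ‖a - w‖ := by
      rw [norm_sub_rev, norm_sub_rev a]
      exact (hP₁ w).2 a haK
    have heq : ‖P₁ w - w‖ = ‖a - w‖ := le_antisymm c2 (by
      have := hgTa.trans hga.symm
      linarith [c1, this.le, this.ge])
    refine proj_eq_of_norm_eq hconv₁ hP₁ haK ?_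
    rw [norm_sub_rev w a, norm_sub_rev w (P₁ w)]
    exact heq.symm
  -- convergence of the whole odd sequence to a
  have hna : Antitone fun m => ‖y m - a‖ := by
    refine antitone_nat_of_succ_le fun m => ?_
    calc ‖y (m + 1) - a‖ = ‖P₁ (P₂ (y m)) - P₁ (P₂ a)‖ := by rw [hrec m, ← hfix]
      _ ≤ ‖P₂ (y m) - P₂ a‖ := proj_nonexp hconv₁ hP₁ _ _
      _ ≤ ‖y m - a‖ := proj_nonexp hconv₂ hP₂ _ _
  have hnb : BddBelow (Set.range fun m => ‖y m - a‖) :=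
    ⟨0, by rintro r ⟨m, rfl⟩; positivity⟩
  have hnL : Tendsto (fun m => ‖y m - a‖) atTop (𝓝 (⨅ m, ‖y m - a‖)) :=
    tendsto_atTop_ciInf hna hnb
  have hL0 : (⨅ m, ‖y m - a‖) = 0 := by
    have t1 : Tendsto (fun m => ‖y (φ m) - a‖) atTop (𝓝 (⨅ m, ‖y m - a‖)) :=
      hnL.comp hφ.tendsto_atTop
    have t2 : Tendsto (fun m => ‖y (φ m) - a‖) atTop (𝓝 0) := by
      rw [← tendsto_iff_norm_sub_tendsto_zero]
      exact hφa
    exact tendsto_nhds_unique t1 t2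
  have hya : Tendsto y atTop (𝓝 a) := by
    rw [tendsto_iff_norm_sub_tendsto_zero]
    rw [hL0] at hnL
    exact hnL
  -- conclusion
  refine ⟨a, haK, P₂ a, (hP₂ a).1, hya, ?_, ?_⟩
  · have : Tendsto (fun m => P₂ (y m)) atTop (𝓝 (P₂ a)) := (hc₂.tendsto a).comp hya
    have he : (fun m : ℕ => x (2 * m + 2)) = fun m => P₂ (y m) := by
      funext m; exact heven m
    rw [he]
    exact this
  · have h2' : ∀ v ∈ K₂, ⟪a - P₂ a, v - P₂ a⟫ ≤ 0 := proj_var_ineq hconv₂ hP₂ a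
    have h1' : ∀ u ∈ K₁, ⟪P₂ a - a, u - a⟫ ≤ 0 := by
      intro u hu
      have := proj_var_ineq hconv₁ hP₁ (P₂ a) u hu
      rwa [← hfix] at this
    refine le_antisymm ?_ ?_
    · refine le_csInf ⟨‖a - P₂ a‖, a, haK, P₂ a, (hP₂ a).1, rfl⟩ ?_
      rintro d ⟨u, hu, v, hv, rfl⟩
      exact pair_min h1' h2' hu hv
    · exact csInf_le ⟨0, by rintro d ⟨u, hu, v, hv, rfl⟩; positivity⟩
        ⟨a, haK, P₂ a, (hP₂ a).1, rfl⟩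
end
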